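/- The squared loss R(t) = f(t)²/2 is strictly increasing and convex on (0,∞), and its derivative satisfies R'(t) = f(t)/(2τ(t)) ≤ δ/2 for all t > 0. -/

import Mathlib

open Real Set MeasureTheory Filter

/-- standard normal density -/
noncomputable def stdPDF (x : ℝ) : ℝ := Real.exp (-x ^ 2 / 2) / Real.sqrt (2 * Real.pi)

lemma stdPDF_eq (x : ℝ) : stdPDF x = Real.exp (-(1/2) * x ^ 2) * (Real.sqrt (2 * Real.pi))⁻¹ := by
  unfold stdPDF; rw [div_eq_mul_inv]; ring_nf

lemma stdPDF_nonneg (x : ℝ) : 0 ≤ stdPDF x := by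
  unfold stdPDF; positivity

lemma stdPDF_cont : Continuous stdPDF := by
  unfold stdPDF
  exact (Real.continuous_exp.comp (by continuity)).div_const _

lemma integrableOn_sq_exp : IntegrableOn (fun x : ℝ => x ^ 2 * Real.exp (-(1/2) * x ^ 2)) (Ioi 0) := by
  have h := integrableOn_rpow_mul_exp_neg_mul_sq (b := 1/2) (by norm_num) (s := 2) (by norm_num)
  exact h.congr_fun (fun x _ => by dsimp only; rw [Real.rpow_two]) measurableSet_Ioi

lemma integrableOn_sq_pdf : IntegrableOn (fun x : ℝ => x ^ 2 * stdPDF x) (Ioi 0) := by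
  have h2 : IntegrableOn
      (fun x : ℝ => x ^ 2 * Real.exp (-(1/2) * x ^ 2) / Real.sqrt (2 * Real.pi)) (Ioi 0) :=
    integrableOn_sq_exp.div_const _
  exact h2.congr_fun (fun x _ => by rw [stdPDF_eq]; ring) measurableSet_Ioi

lemma int_sq_pdf : ∫ x in Ioi (0:ℝ), x ^ 2 * stdPDF x = 1/2 := by
  have hd : ∀ x ∈ Ici (0:ℝ), HasDerivAt (fun y : ℝ => -y * Real.exp (-(1/2) * y ^ 2))
      ((x ^ 2 - 1) * Real.exp (-(1/2) * x ^ 2)) x := by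
    intro x _
    have h1 : HasDerivAt (fun y : ℝ => -(1/2) * y ^ 2) (-(1/2) * (2 * x)) x := by
      simpa using ((hasDerivAt_pow 2 x).const_mul (-(1/2):ℝ))
    have h2 : HasDerivAt (fun y : ℝ => Real.exp (-(1/2) * y ^ 2))
        (Real.exp (-(1/2) * x ^ 2) * (-(1/2) * (2 * x))) x := h1.exp
    have h3 := ((hasDerivAt_id x).neg.mul h2)
    refine (h3 : HasDerivAt (fun y : ℝ => -y * Real.exp (-(1/2) * y ^ 2)) _ x).congr_deriv ?_
    simp only [Pi.neg_apply, id_eq]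
    ring
  have hexp : IntegrableOn (fun x : ℝ => Real.exp (-(1/2) * x ^ 2)) (Ioi 0) :=
    (integrable_exp_neg_mul_sq (by norm_num)).integrableOn
  have hint : IntegrableOn (fun x : ℝ => (x ^ 2 - 1) * Real.exp (-(1/2) * x ^ 2)) (Ioi 0) := by
    have h0 : IntegrableOn ((fun x : ℝ => x ^ 2 * Real.exp (-(1/2) * x ^ 2))
        - fun x : ℝ => Real.exp (-(1/2) * x ^ 2)) (Ioi 0) := integrableOn_sq_exp.sub hexp
    exact h0.congr_fun (fun x _ => by simp only [Pi.sub_apply]; ring) measurableSet_Ioi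
  have htend : Tendsto (fun y : ℝ => -y * Real.exp (-(1/2) * y ^ 2)) atTop (nhds 0) := by
    have h := rpow_mul_exp_neg_mul_sq_isLittleO_exp_neg (b := 1/2) (by norm_num) 1
    have hb : Tendsto (fun x : ℝ => -(1/2) * x) atTop atBot :=
      Tendsto.const_mul_atTop_of_neg (by norm_num) tendsto_id
    have h0 : Tendsto (fun x : ℝ => Real.exp (-(1/2) * x)) atTop (nhds 0) :=
      Real.tendsto_exp_atBot.comp hb
    have h1 : Tendsto (fun x : ℝ => x ^ (1:ℝ) * Real.exp (-(1/2) * x ^ 2)) atTop (nhds 0) :=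
      h.tendsto_zero_of_tendsto h0
    have h2 : Tendsto (fun x : ℝ => x * Real.exp (-(1/2) * x ^ 2)) atTop (nhds 0) := by
      apply h1.congr'
      filter_upwards [eventually_gt_atTop (0:ℝ)] with x hx
      rw [Real.rpow_one]
    simpa using h2.neg
  have key := integral_Ioi_of_hasDerivAt_of_tendsto' hd hint htend
  have key2 : ∫ x in Ioi (0:ℝ), (x ^ 2 - 1) * Real.exp (-(1/2) * x ^ 2) = 0 := by
    simpa using key
  have hsplit : ∫ x in Ioi (0:ℝ), (x ^ 2 - 1) * Real.exp (-(1/2) * x ^ 2)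
      = (∫ x in Ioi (0:ℝ), x ^ 2 * Real.exp (-(1/2) * x ^ 2))
        - ∫ x in Ioi (0:ℝ), Real.exp (-(1/2) * x ^ 2) := by
    rw [← integral_sub integrableOn_sq_exp hexp]
    apply setIntegral_congr_fun measurableSet_Ioi
    intro x _
    ring
  have hgauss : ∫ x in Ioi (0:ℝ), Real.exp (-(1/2) * x ^ 2) = Real.sqrt (2 * Real.pi) / 2 := by
    have h := integral_gaussian_Ioi (1/2)
    rw [h]
    rw [show Real.pi / (1/2) = 2 * Real.pi by ring]
  have hval : ∫ x in Ioi (0:ℝ), x ^ 2 * Real.exp (-(1/2) * x ^ 2) = Real.sqrt (2 * Real.pi) / 2 := by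
    have := hsplit.symm.trans key2
    linarith [hgauss]
  have hrw : ∫ x in Ioi (0:ℝ), x ^ 2 * stdPDF x
      = (∫ x in Ioi (0:ℝ), x ^ 2 * Real.exp (-(1/2) * x ^ 2)) * (Real.sqrt (2 * Real.pi))⁻¹ := by
    rw [← integral_mul_const]
    apply setIntegral_congr_fun measurableSet_Ioi
    intro x _
    simp only [stdPDF_eq]
    ring
  rw [hrw, hval]
  have hpos : (0:ℝ) < Real.sqrt (2 * Real.pi) := by positivity
  field_simp
/-- The objective F(τ; t, δ). -/
noncomputable def Fobj (δ t τ : ℝ) : ℝ :=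
  τ / 2 * (δ - 1 / 2) + t / (2 * τ)
    + τ / 2 * ∫ x in Set.Ioi (2 / τ), (x - 2 / τ) ^ 2 * stdPDF x

noncomputable def gmom (u : ℝ) : ℝ := ∫ x in Ioi (0:ℝ), max (x - u) 0 ^ 2 * stdPDF x

noncomputable def Hfun (τ : ℝ) : ℝ := τ / 2 * gmom (2 / τ)

lemma integrableOn_gmom {u : ℝ} (hu : 0 ≤ u) :
    IntegrableOn (fun x : ℝ => max (x - u) 0 ^ 2 * stdPDF x) (Ioi 0) := by
  apply Integrable.mono' integrableOn_sq_pdf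
  · exact (((continuous_id.sub continuous_const).max continuous_const).pow 2).mul
      stdPDF_cont |>.aestronglyMeasurable
  · filter_upwards [ae_restrict_mem measurableSet_Ioi] with x hx
    rw [Real.norm_eq_abs, abs_of_nonneg (mul_nonneg (by positivity) (stdPDF_nonneg x))]
    have h1 : max (x - u) 0 ≤ x := max_le (by linarith) (le_of_lt hx)
    have h2 : max (x - u) 0 ^ 2 ≤ x ^ 2 := pow_le_pow_left₀ (le_max_right _ _) h1 2
    exact mul_le_mul_of_nonneg_right h2 (stdPDF_nonneg x)

lemma gmom_nonneg {u : ℝ} : 0 ≤ gmom u := by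
  apply setIntegral_nonneg measurableSet_Ioi
  intro x _
  have := stdPDF_nonneg x
  positivity

lemma gmom_anti {u v : ℝ} (hu : 0 ≤ u) (huv : u ≤ v) : gmom v ≤ gmom u := by
  apply setIntegral_mono_on (integrableOn_gmom (le_trans hu huv)) (integrableOn_gmom hu)
    measurableSet_Ioi
  intro x _
  have h1 : max (x - v) 0 ≤ max (x - u) 0 := max_le_max (by linarith) le_rfl
  have h2 : max (x - v) 0 ^ 2 ≤ max (x - u) 0 ^ 2 :=
    pow_le_pow_left₀ (le_max_right _ _) h1 2
  exact mul_le_mul_of_nonneg_right h2 (stdPDF_nonneg x)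

lemma gmom_le_half {u : ℝ} (hu : 0 ≤ u) : gmom u ≤ 1/2 := by
  rw [← int_sq_pdf]
  apply setIntegral_mono_on (integrableOn_gmom hu) integrableOn_sq_pdf measurableSet_Ioi
  intro x hx
  have h1 : max (x - u) 0 ≤ x := max_le (by linarith) (le_of_lt hx)
  have h2 : max (x - u) 0 ^ 2 ≤ x ^ 2 := pow_le_pow_left₀ (le_max_right _ _) h1 2
  exact mul_le_mul_of_nonneg_right h2 (stdPDF_nonneg x)

lemma gmom_eq {u : ℝ} (hu : 0 < u) :
    ∫ x in Ioi u, (x - u) ^ 2 * stdPDF x = gmom u := by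
  have hsplit : Ioc 0 u ∪ Ioi u = Ioi (0:ℝ) := Ioc_union_Ioi_eq_Ioi (le_of_lt hu)
  have hdisj : Disjoint (Ioc 0 u) (Ioi u) := Ioc_disjoint_Ioi le_rfl
  have hi1 : IntegrableOn (fun x : ℝ => max (x - u) 0 ^ 2 * stdPDF x) (Ioc 0 u) :=
    (integrableOn_gmom (le_of_lt hu)).mono_set (Ioc_subset_Ioi_self.trans (by simp))
  have hi2 : IntegrableOn (fun x : ℝ => max (x - u) 0 ^ 2 * stdPDF x) (Ioi u) :=
    (integrableOn_gmom (le_of_lt hu)).mono_set (Ioi_subset_Ioi (le_of_lt hu))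
  have := setIntegral_union hdisj measurableSet_Ioi hi1 hi2
    (f := fun x : ℝ => max (x - u) 0 ^ 2 * stdPDF x) (μ := volume)
  rw [hsplit] at this
  unfold gmom
  rw [this]
  have hz : ∫ x in Ioc (0:ℝ) u, max (x - u) 0 ^ 2 * stdPDF x = 0 := by
    rw [setIntegral_congr_fun measurableSet_Ioc (g := fun _ : ℝ => (0:ℝ))]
    · simp
    · intro x hx
      have hxu : x - u ≤ 0 := by linarith [hx.2]
      show max (x - u) 0 ^ 2 * stdPDF x = 0
      rw [max_eq_right hxu]
      simp
  rw [hz, zero_add]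
  apply setIntegral_congr_fun measurableSet_Ioi
  intro x hx
  show (x - u) ^ 2 * stdPDF x = max (x - u) 0 ^ 2 * stdPDF x
  rw [max_eq_left (by linarith [mem_Ioi.mp hx])]

lemma Fobj_eq {δ t τ : ℝ} (hτ : 0 < τ) :
    Fobj δ t τ = τ / 2 * (δ - 1/2) + t / (2 * τ) + Hfun τ := by
  unfold Fobj Hfun
  rw [gmom_eq (by positivity)]

lemma Hfun_nonneg {τ : ℝ} (hτ : 0 < τ) : 0 ≤ Hfun τ := by
  unfold Hfun
  exact mul_nonneg (by positivity) (gmom_nonneg (u := 2/τ))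

lemma Hfun_le {τ : ℝ} (hτ : 0 < τ) : Hfun τ ≤ τ / 4 := by
  unfold Hfun
  have h := gmom_le_half (u := 2/τ) (by positivity)
  nlinarith

/-- affine minorant of `τ ↦ τ/2 · ((x−2/τ)₊)²` -/
lemma minorant {x τ s : ℝ} (hx : 0 < x) (hτ : 0 < τ) (hs0 : 0 < s) (hs1 : s ≤ 1) :
    (1 - s^2) * x^2 * τ / 2 + (2*s - 2) * x ≤ τ / 2 * max (x - 2/τ) 0 ^ 2 := by
  rcases le_or_gt x (2/τ) with hc | hc
  · rw [max_eq_right (by linarith)]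
    have hτx : τ * x ≤ 2 := by
      have := (le_div_iff₀ hτ).mp hc
      nlinarith
    have h4 : (1 + s) * (τ * x) ≤ 4 := by nlinarith
    nlinarith [mul_nonneg (mul_nonneg hx.le (sub_nonneg.2 hs1)) (sub_nonneg.2 h4)]
  · rw [max_eq_left (by linarith)]
    have key : τ / 2 * (x - 2/τ)^2 - ((1 - s^2) * x^2 * τ / 2 + (2*s - 2) * x)
        = τ / 2 * (s*x - 2/τ)^2 := by
      field_simp
      ring
    nlinarith [sq_nonneg (s*x - 2/τ), key]

lemma touch {x τ : ℝ} (hx : 0 < x) (hτ : 0 < τ) :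
    ∃ s : ℝ, 0 < s ∧ s ≤ 1 ∧
      τ / 2 * max (x - 2/τ) 0 ^ 2 = (1 - s^2) * x^2 * τ / 2 + (2*s - 2) * x := by
  rcases le_or_gt x (2/τ) with hc | hc
  · exact ⟨1, one_pos, le_rfl, by rw [max_eq_right (by linarith)]; ring⟩
  · refine ⟨2/(τ*x), by positivity, ?_, ?_⟩
    · rw [div_le_one (by positivity)]
      have := (div_lt_iff₀ hτ).mp hc
      nlinarith
    · rw [max_eq_left (by linarith)]
      have hne : τ * x ≠ 0 := by positivity
      field_simp
      ring
lemma ptwise_convex {x τ0 τ1 a b : ℝ} (hx : 0 < x) (h0 : 0 < τ0) (h1 : 0 < τ1)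
    (ha : 0 ≤ a) (hb : 0 ≤ b) (hab : a + b = 1) :
    (a*τ0 + b*τ1) / 2 * max (x - 2/(a*τ0 + b*τ1)) 0 ^ 2
      ≤ a * (τ0 / 2 * max (x - 2/τ0) 0 ^ 2) + b * (τ1 / 2 * max (x - 2/τ1) 0 ^ 2) := by
  have hlam : 0 < a*τ0 + b*τ1 := by
    have := (convex_Ioi (0:ℝ)) (mem_Ioi.2 h0) (mem_Ioi.2 h1) ha hb hab
    simpa using this
  obtain ⟨s, hs0, hs1, hs⟩ := touch hx hlam
  rw [hs]
  have m0 := minorant hx h0 hs0 hs1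
  have m1 := minorant hx h1 hs0 hs1
  have hone : (2*s-2)*x = (a+b)*((2*s-2)*x) := by rw [hab]; ring
  nlinarith [mul_le_mul_of_nonneg_left m0 ha, mul_le_mul_of_nonneg_left m1 hb]

lemma Hfun_int {τ : ℝ} (hτ : 0 < τ) :
    Hfun τ = ∫ x in Ioi (0:ℝ), τ/2 * (max (x - 2/τ) 0 ^ 2 * stdPDF x) := by
  unfold Hfun gmom
  rw [integral_const_mul]

lemma integrableOn_HP {τ : ℝ} (hτ : 0 < τ) :
    IntegrableOn (fun x : ℝ => τ/2 * (max (x - 2/τ) 0 ^ 2 * stdPDF x)) (Ioi 0) :=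
  (integrableOn_gmom (by positivity)).const_mul _

lemma Hfun_convexOn : ConvexOn ℝ (Ioi 0) Hfun := by
  refine ⟨convex_Ioi 0, ?_⟩
  intro τ0 h0 τ1 h1 a b ha hb hab
  have h0' := mem_Ioi.mp h0
  have h1' := mem_Ioi.mp h1
  have hmid : (0:ℝ) < a*τ0 + b*τ1 := by
    have := (convex_Ioi (0:ℝ)) h0 h1 ha hb hab
    simpa using this
  simp only [smul_eq_mul]
  rw [Hfun_int hmid, Hfun_int h0', Hfun_int h1']
  have hi0 := integrableOn_HP h0'
  have hi1 := integrableOn_HP h1'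
  rw [← integral_const_mul, ← integral_const_mul, ← integral_add (hi0.const_mul a) (hi1.const_mul b)]
  apply setIntegral_mono_on (integrableOn_HP hmid) ((hi0.const_mul a).add (hi1.const_mul b))
    measurableSet_Ioi
  intro x hx
  have h := ptwise_convex (mem_Ioi.mp hx) h0' h1' ha hb hab
  have h2 := mul_le_mul_of_nonneg_right h (stdPDF_nonneg x)
  simp only [Pi.add_apply]
  ring_nf at h2 ⊢
  linarith

lemma ptwise_lip {x τ σ : ℝ} (hx : 0 < x) (hτ : 0 < τ) (hτσ : τ ≤ σ) :
    σ/2 * max (x - 2/σ) 0 ^ 2 - τ/2 * max (x - 2/τ) 0 ^ 2 ≤ (σ - τ) * x^2 / 2 := by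
  have hσ : 0 < σ := lt_of_lt_of_le hτ hτσ
  have hinv : 2/σ ≤ 2/τ := by
    rw [div_le_div_iff₀ hσ hτ]
    nlinarith
  rcases le_or_gt x (2/σ) with hc | hc
  · rw [max_eq_right (by linarith), max_eq_right (by linarith)]
    nlinarith [sq_nonneg x]
  · rw [max_eq_left (by linarith)]
    rcases le_or_gt x (2/τ) with hc2 | hc2
    · rw [max_eq_right (by linarith)]
      have h1 : τ * x ≤ 2 := by
        have := (le_div_iff₀ hτ).mp hc2
        nlinarith
      have h3 : 2/σ ≤ x := le_of_lt hc
      have key : σ/2 * (x - 2/σ)^2 = σ*x^2/2 - 2*x + 2/σ := by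
        field_simp
        ring
      have h4 : τ*x^2/2 ≤ x := by nlinarith
      rw [key]
      nlinarith
    · rw [max_eq_left (by linarith)]
      have key : σ/2*(x-2/σ)^2 - τ/2*(x-2/τ)^2 = (σ-τ)*x^2/2 + 2/σ - 2/τ := by
        field_simp
        ring
      linarith
lemma Hfun_lip {τ σ : ℝ} (hτ : 0 < τ) (hτσ : τ ≤ σ) : Hfun σ - Hfun τ ≤ (σ - τ)/4 := by
  have hσ := lt_of_lt_of_le hτ hτσ
  rw [Hfun_int hσ, Hfun_int hτ,
    ← integral_sub (integrableOn_HP hσ) (integrableOn_HP hτ)]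
  have hb : ∫ x in Ioi (0:ℝ), (σ-τ)/2 * (x^2 * stdPDF x) = (σ - τ)/4 := by
    rw [integral_const_mul, int_sq_pdf]
    ring
  rw [← hb]
  apply setIntegral_mono_on
    ((integrableOn_HP hσ).sub (integrableOn_HP hτ))
    (integrableOn_sq_pdf.const_mul _) measurableSet_Ioi
  intro x hx
  have h := ptwise_lip (mem_Ioi.mp hx) hτ hτσ
  have h2 := mul_le_mul_of_nonneg_right h (stdPDF_nonneg x)
  simp only [Pi.sub_apply]
  ring_nf at h2 ⊢
  linarith

lemma inv_combo {x y a b : ℝ} (hx : 0 < x) (hy : 0 < y) (ha : 0 ≤ a) (hb : 0 ≤ b)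
    (hab : a + b = 1) : 1/(a*x + b*y) ≤ a*(1/x) + b*(1/y) := by
  have hxy : 0 < a*x + b*y := by
    have := (convex_Ioi (0:ℝ)) (mem_Ioi.2 hx) (mem_Ioi.2 hy) ha hb hab
    simpa using this
  have key : a*(1/x) + b*(1/y) = (a*y + b*x)/(x*y) := by
    field_simp
  rw [key, div_le_div_iff₀ hxy (mul_pos hx hy)]
  have h2 : a^2 + b^2 = 1 - 2*(a*b) := by nlinarith
  nlinarith [mul_nonneg (mul_nonneg ha hb) (sq_nonneg (x - y)), mul_pos hx hy, h2]
set_option maxHeartbeats 2000000 in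
theorem R_properties (δ : ℝ) (hδ : 1 / 2 < δ) (τmin f R : ℝ → ℝ)
    (hτ : ∀ t : ℝ, 0 < t → τmin t ∈ Set.Ioi (0 : ℝ) ∧
      IsMinOn (Fobj δ t) (Set.Ioi (0 : ℝ)) (τmin t))
    (hf : ∀ t : ℝ, 0 < t → f t = Fobj δ t (τmin t))
    (hR : ∀ t : ℝ, R t = f t ^ 2 / 2) :
    StrictMonoOn R (Set.Ioi (0 : ℝ)) ∧
    ConvexOn ℝ (Set.Ioi (0 : ℝ)) R ∧
    (∀ t : ℝ, 0 < t →
      HasDerivAt R (f t / (2 * τmin t)) t ∧ f t / (2 * τmin t) ≤ δ / 2) := by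
  have hπ : ∀ t : ℝ, 0 < t → 0 < τmin t := fun t ht => mem_Ioi.mp (hτ t ht).1
  have hmin : ∀ t : ℝ, 0 < t → ∀ σ : ℝ, 0 < σ → Fobj δ t (τmin t) ≤ Fobj δ t σ :=
    fun t ht σ hσ => isMinOn_iff.mp (hτ t ht).2 σ (mem_Ioi.2 hσ)
  have hshift : ∀ s t σ : ℝ, Fobj δ s σ = Fobj δ t σ + (s - t)/(2*σ) := by
    intro s t σ
    unfold Fobj
    ring
  have hFeq : ∀ t σ : ℝ, 0 < σ → Fobj δ t σ = σ/2*(δ-1/2) + t/(2*σ) + Hfun σ :=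
    fun t σ hσ => Fobj_eq hσ
  have henv : ∀ s t : ℝ, 0 < s → 0 < t → f s ≤ f t + (s - t)/(2 * τmin t) := by
    intro s t hs ht
    rw [hf s hs, hf t ht]
    calc Fobj δ s (τmin s) ≤ Fobj δ s (τmin t) := hmin s hs _ (hπ t ht)
      _ = Fobj δ t (τmin t) + (s-t)/(2*τmin t) := hshift s t _
  have hτmono : ∀ s t : ℝ, 0 < s → s ≤ t → τmin s ≤ τmin t := by
    intro s t hs hst
    rcases eq_or_lt_of_le hst with rfl | hlt
    · exact le_rfl
    have ht : 0 < t := lt_trans hs hlt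
    have h1 := hmin s hs (τmin t) (hπ t ht)
    have h2 := hmin t ht (τmin s) (hπ s hs)
    rw [hshift s t (τmin t), hshift s t (τmin s)] at h1
    have h3 : (s-t)/(2*τmin s) ≤ (s-t)/(2*τmin t) := by linarith
    by_contra hcon
    push_neg at hcon
    have h4 : (s-t)/(2*τmin t) < (s-t)/(2*τmin s) := by
      rw [div_lt_div_iff₀ (by have := hπ t ht; positivity) (by have := hπ s hs; positivity)]
      nlinarith [hπ s hs, hπ t ht]
    linarith
  have htle : ∀ t : ℝ, 0 < t → t ≤ δ * τmin t ^ 2 := by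
    intro t ht
    have hτt : 0 < τmin t := hπ t ht
    have key : ∀ ε : ℝ, 0 < ε → t ≤ δ*τmin t^2 + δ*τmin t*ε := by
      intro ε hε
      have hσ : 0 < τmin t + ε := by linarith
      have h1 := hmin t ht (τmin t + ε) hσ
      rw [hFeq t (τmin t) hτt, hFeq t (τmin t+ε) hσ] at h1
      have h2 : Hfun (τmin t + ε) - Hfun (τmin t) ≤ (τmin t + ε - τmin t)/4 :=
        Hfun_lip hτt (by linarith)
      have h3 : t/(2*τmin t) - t/(2*(τmin t+ε)) ≤ ε * δ/2 := by nlinarith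
      have e : t/(2*τmin t) - t/(2*(τmin t+ε)) = t*ε/(2*τmin t*(τmin t+ε)) := by
        field_simp
        ring
      rw [e] at h3
      rw [div_le_iff₀ (by positivity)] at h3
      nlinarith
    by_contra hcon
    push_neg at hcon
    have hδ0 : 0 < δ := by linarith
    have hgap : 0 < t - δ*τmin t^2 := by linarith
    have h1 := key ((t - δ*τmin t^2)/(2*δ*τmin t)) (by positivity)
    have h2 : δ*τmin t*((t-δ*τmin t^2)/(2*δ*τmin t)) = (t-δ*τmin t^2)/2 := by
      field_simp
    rw [h2] at h1
    linarith
  have hfval : ∀ t : ℝ, 0 < t →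
      f t = τmin t/2*(δ-1/2) + t/(2*τmin t) + Hfun (τmin t) :=
    fun t ht => (hf t ht).trans (hFeq t _ (hπ t ht))
  have hfpos : ∀ t : ℝ, 0 < t → 0 < f t := by
    intro t ht
    rw [hfval t ht]
    have h0 := hπ t ht
    have h1 := Hfun_nonneg h0
    have h2 : 0 < t/(2*τmin t) := by positivity
    nlinarith
  have hfle : ∀ t : ℝ, 0 < t → f t ≤ δ * τmin t := by
    intro t ht
    rw [hfval t ht]
    have h0 := hπ t ht
    have h1 := Hfun_le h0
    have h2 : t/(2*τmin t) ≤ δ*τmin t/2 := by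
      rw [div_le_div_iff₀ (by positivity) (by norm_num)]
      nlinarith [htle t ht]
    nlinarith
  have hfmono : ∀ s t : ℝ, 0 < s → s < t → f s < f t := by
    intro s t hs hst
    have ht := lt_trans hs hst
    have h1 := henv s t hs ht
    have h2 : (s-t)/(2*τmin t) < 0 :=
      div_neg_of_neg_of_pos (by linarith) (by have := hπ t ht; positivity)
    linarith
  have hFconv : ∀ t : ℝ, 0 < t → ConvexOn ℝ (Ioi 0) (Fobj δ t) := by
    intro t ht
    refine ⟨convex_Ioi 0, ?_⟩
    intro x hx y hy a b ha hb hab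
    have hx' := mem_Ioi.mp hx
    have hy' := mem_Ioi.mp hy
    have hmid : (0:ℝ) < a*x + b*y := by simpa using (convex_Ioi (0:ℝ)) hx hy ha hb hab
    simp only [smul_eq_mul]
    rw [hFeq t _ hmid, hFeq t x hx', hFeq t y hy']
    have hH := Hfun_convexOn.2 hx hy ha hb hab
    simp only [smul_eq_mul] at hH
    have hinv := inv_combo hx' hy' ha hb hab
    have hinv2 : t/(2*(a*x+b*y)) ≤ a*(t/(2*x)) + b*(t/(2*y)) := by
      calc t/(2*(a*x+b*y)) = t/2 * (1/(a*x+b*y)) := by rw [mul_one_div, div_div]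
        _ ≤ t/2 * (a*(1/x) + b*(1/y)) := mul_le_mul_of_nonneg_left hinv (by positivity)
        _ = a*(t/(2*x)) + b*(t/(2*y)) := by ring
    have hlin : (a*x+b*y)/2*(δ-1/2) = a*(x/2*(δ-1/2)) + b*(y/2*(δ-1/2)) := by ring
    linarith
  have huniq : ∀ t : ℝ, 0 < t → ∀ σ : ℝ, 0 < σ →
      IsMinOn (Fobj δ t) (Ioi 0) σ → σ = τmin t := by
    intro t ht σ hσ hminσ
    by_contra hne
    have hτt := hπ t ht
    have hμpos : (0:ℝ) < (σ + τmin t)/2 := by positivity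
    have h1 : Fobj δ t σ = Fobj δ t (τmin t) :=
      le_antisymm (isMinOn_iff.mp hminσ _ (mem_Ioi.2 hτt)) (hmin t ht σ hσ)
    have h2 : Fobj δ t (τmin t) ≤ Fobj δ t ((σ + τmin t)/2) := hmin t ht _ hμpos
    have hH := Hfun_convexOn.2 (mem_Ioi.2 hσ) (mem_Ioi.2 hτt)
      (by norm_num : (0:ℝ) ≤ 1/2) (by norm_num : (0:ℝ) ≤ 1/2) (by norm_num)
    simp only [smul_eq_mul] at hH
    have hμeq : (1:ℝ)/2*σ + 1/2*τmin t = (σ + τmin t)/2 := by ring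
    rw [hμeq] at hH
    have hsq : 0 < (σ - τmin t)^2 := by
      have : σ - τmin t ≠ 0 := sub_ne_zero.2 hne
      positivity
    have hstrict : t/(2*((σ + τmin t)/2)) < 1/2*(t/(2*σ)) + 1/2*(t/(2*τmin t)) := by
      have e1 : 1/2*(t/(2*σ)) + 1/2*(t/(2*τmin t)) = t*(σ+τmin t)/(4*σ*τmin t) := by
        field_simp
        ring
      have e2 : t/(2*((σ + τmin t)/2)) = t/(σ+τmin t) := by
        congr 1
        ring
      rw [e1, e2, div_lt_div_iff₀ (by positivity) (by positivity)]
      nlinarith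
    have hFμ : Fobj δ t ((σ + τmin t)/2) < Fobj δ t (τmin t) := by
      rw [hFeq t σ hσ, hFeq t _ hτt] at h1
      rw [hFeq t _ hμpos, hFeq t _ hτt]
      have hlin : (σ + τmin t)/2/2*(δ-1/2)
          = 1/2*(σ/2*(δ-1/2)) + 1/2*(τmin t/2*(δ-1/2)) := by ring
      linarith
    linarith
  have hright : ∀ t : ℝ, 0 < t → ∀ b c : ℝ, τmin t < b → b ≤ c →
      Fobj δ t b ≤ Fobj δ t c := by
    intro t ht b c hb hbc
    rcases eq_or_lt_of_le hbc with rfl | hlt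
    · exact le_rfl
    have hτt := hπ t ht
    have hbpos : 0 < b := lt_trans hτt hb
    have hcpos : 0 < c := lt_trans hbpos hlt
    have hd : 0 < c - τmin t := by linarith
    have h1 : 0 ≤ (c - b)/(c - τmin t) := div_nonneg (by linarith) hd.le
    have h2 : 0 ≤ (b - τmin t)/(c - τmin t) := div_nonneg (by linarith) hd.le
    have hsum : (c - b)/(c - τmin t) + (b - τmin t)/(c - τmin t) = 1 := by
      rw [← add_div, div_eq_one_iff_eq hd.ne']
      ring
    have hcomb : (c - b)/(c - τmin t) * τmin t + (b - τmin t)/(c - τmin t) * c = b := by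
      field_simp
      ring
    have hcx := (hFconv t ht).2 (mem_Ioi.2 hτt) (mem_Ioi.2 hcpos) h1 h2 hsum
    simp only [smul_eq_mul] at hcx
    rw [hcomb] at hcx
    have hmin' := hmin t ht c hcpos
    calc Fobj δ t b
        ≤ (c - b)/(c - τmin t) * Fobj δ t (τmin t)
          + (b - τmin t)/(c - τmin t) * Fobj δ t c := hcx
      _ ≤ (c - b)/(c - τmin t) * Fobj δ t c
          + (b - τmin t)/(c - τmin t) * Fobj δ t c := by
          nlinarith [mul_le_mul_of_nonneg_left hmin' h1]
      _ = Fobj δ t c := by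
          rw [← add_mul, hsum, one_mul]
  have hleft : ∀ t : ℝ, 0 < t → ∀ b c : ℝ, 0 < b → b ≤ c → c < τmin t →
      Fobj δ t c ≤ Fobj δ t b := by
    intro t ht b c hbpos hbc hc
    rcases eq_or_lt_of_le hbc with rfl | hlt
    · exact le_rfl
    have hτt := hπ t ht
    have hd : 0 < τmin t - b := by linarith
    have h1 : 0 ≤ (τmin t - c)/(τmin t - b) := div_nonneg (by linarith) hd.le
    have h2 : 0 ≤ (c - b)/(τmin t - b) := div_nonneg (by linarith) hd.le
    have hsum : (τmin t - c)/(τmin t - b) + (c - b)/(τmin t - b) = 1 := by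
      rw [← add_div, div_eq_one_iff_eq hd.ne']
      ring
    have hcomb : (τmin t - c)/(τmin t - b) * b + (c - b)/(τmin t - b) * τmin t = c := by
      field_simp
      ring
    have hcx := (hFconv t ht).2 (mem_Ioi.2 hbpos) (mem_Ioi.2 hτt) h1 h2 hsum
    simp only [smul_eq_mul] at hcx
    rw [hcomb] at hcx
    have hmin' := hmin t ht b hbpos
    calc Fobj δ t c
        ≤ (τmin t - c)/(τmin t - b) * Fobj δ t b
          + (c - b)/(τmin t - b) * Fobj δ t (τmin t) := hcx
      _ ≤ (τmin t - c)/(τmin t - b) * Fobj δ t b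
          + (c - b)/(τmin t - b) * Fobj δ t b := by
          nlinarith [mul_le_mul_of_nonneg_left hmin' h2]
      _ = Fobj δ t b := by
          rw [← add_mul, hsum, one_mul]
  have hrcont : ∀ t : ℝ, 0 < t → ∀ ε : ℝ, 0 < ε → ∃ s, t < s ∧ τmin s < τmin t + ε := by
    intro t ht ε hε
    by_contra hcon
    push_neg at hcon
    have hτt := hπ t ht
    have hbpos : 0 < τmin t + ε := by linarith
    have hgap : Fobj δ t (τmin t) < Fobj δ t (τmin t + ε) := by
      have h1 : Fobj δ t (τmin t) ≤ Fobj δ t (τmin t + ε) := hmin t ht _ hbpos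
      rcases eq_or_lt_of_le h1 with heq | hlt
      · exfalso
        have hm2 : IsMinOn (Fobj δ t) (Ioi 0) (τmin t + ε) := by
          rw [isMinOn_iff]
          intro σ hσ
          rw [← heq]
          exact hmin t ht σ (mem_Ioi.mp hσ)
        have := huniq t ht (τmin t + ε) hbpos hm2
        linarith
      · exact hlt
    obtain ⟨γ, hγdef⟩ : ∃ γ : ℝ, γ = Fobj δ t (τmin t + ε) - Fobj δ t (τmin t) := ⟨_, rfl⟩
    have hγpos : 0 < γ := by rw [hγdef]; linarith
    obtain ⟨s, hsdef⟩ : ∃ s : ℝ, s = t + τmin t * γ := ⟨_, rfl⟩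
    have hst : t < s := by
      have : 0 < τmin t * γ := mul_pos hτt hγpos
      rw [hsdef]
      linarith
    have hspos : 0 < s := lt_trans ht hst
    have hτs := hcon s hst
    have hτspos := hπ s hspos
    have h2 : Fobj δ s (τmin s) ≤ Fobj δ s (τmin t) := hmin s hspos _ hτt
    rw [hshift s t (τmin t), hshift s t (τmin s)] at h2
    have h3 : Fobj δ t (τmin t + ε) ≤ Fobj δ t (τmin s) :=
      hright t ht _ _ (by linarith) hτs
    have h4 : 0 ≤ (s - t)/(2*τmin s) :=
      div_nonneg (by linarith) (by positivity)
    have h5 : (s - t)/(2*τmin t) = γ/2 := by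
      rw [hsdef]
      field_simp
      ring
    rw [h5] at h2
    linarith
  have hlcont : ∀ t : ℝ, 0 < t → ∀ ε : ℝ, 0 < ε →
      ∃ s, 0 < s ∧ s < t ∧ τmin t - ε < τmin s := by
    intro t ht ε hε
    rcases le_or_gt (τmin t - ε) 0 with hle | hpos
    · exact ⟨t/2, by positivity, by linarith,
        lt_of_le_of_lt hle (hπ _ (by positivity))⟩
    by_contra hcon
    push_neg at hcon
    have hτt := hπ t ht
    have hδ0 : 0 < δ := by linarith
    have hgap : Fobj δ t (τmin t) < Fobj δ t (τmin t - ε) := by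
      have h1 : Fobj δ t (τmin t) ≤ Fobj δ t (τmin t - ε) := hmin t ht _ hpos
      rcases eq_or_lt_of_le h1 with heq | hlt
      · exfalso
        have hm2 : IsMinOn (Fobj δ t) (Ioi 0) (τmin t - ε) := by
          rw [isMinOn_iff]
          intro σ hσ
          rw [← heq]
          exact hmin t ht σ (mem_Ioi.mp hσ)
        have := huniq t ht (τmin t - ε) hpos hm2
        linarith
      · exact hlt
    obtain ⟨γ, hγdef⟩ : ∃ γ : ℝ, γ = Fobj δ t (τmin t - ε) - Fobj δ t (τmin t) := ⟨_, rfl⟩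
    have hγpos : 0 < γ := by rw [hγdef]; linarith
    obtain ⟨β, hβdef⟩ : ∃ β : ℝ, β = Real.sqrt (t/(2*δ)) := ⟨_, rfl⟩
    have hβpos : 0 < β := by rw [hβdef]; exact Real.sqrt_pos.2 (by positivity)
    obtain ⟨m, hmdef⟩ : ∃ m : ℝ, m = min (t/2) (β*γ) := ⟨_, rfl⟩
    have hm : 0 < m := by
      rw [hmdef]
      exact lt_min (by positivity) (mul_pos hβpos hγpos)
    obtain ⟨s, hsdef⟩ : ∃ s : ℝ, s = t - m := ⟨_, rfl⟩
    have hs1 : t/2 ≤ s := by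
      have h := min_le_left (t/2) (β*γ)
      rw [hsdef, hmdef]
      linarith [min_le_left (t/2) (β*γ)]
    have hspos : 0 < s := by linarith
    have hst : s < t := by rw [hsdef]; linarith
    have hτs := hcon s hspos hst
    have hτspos := hπ s hspos
    have hβle : β ≤ τmin s := by
      have h1 := htle s hspos
      have h2 : t/(2*δ) ≤ τmin s^2 := by
        rw [div_le_iff₀ (by positivity)]
        nlinarith
      rw [hβdef]
      calc Real.sqrt (t/(2*δ)) ≤ Real.sqrt (τmin s^2) := Real.sqrt_le_sqrt h2
        _ = τmin s := Real.sqrt_sq hτspos.le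
    have h3 : Fobj δ t (τmin t - ε) ≤ Fobj δ t (τmin s) :=
      hleft t ht _ _ hτspos hτs (by linarith)
    have h4 : Fobj δ t (τmin s) = Fobj δ s (τmin s) + (t-s)/(2*τmin s) := hshift t s _
    have h5 : Fobj δ s (τmin s) ≤ Fobj δ s (τmin t) := hmin s hspos _ hτt
    have h6 : Fobj δ s (τmin t) = Fobj δ t (τmin t) + (s-t)/(2*τmin t) := hshift s t _
    have h7 : (t-s)/(2*τmin s) ≤ m/(2*β) := by
      have hts : t - s = m := by rw [hsdef]; ring
      rw [hts, div_le_div_iff₀ (by positivity) (by positivity)]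
      nlinarith
    have h8 : m/(2*β) ≤ γ/2 := by
      have hmr : m ≤ β*γ := by rw [hmdef]; exact min_le_right _ _
      rw [div_le_div_iff₀ (by positivity) (by norm_num)]
      nlinarith
    have h9' : (s-t)/(2*τmin t) ≤ 0 :=
      div_nonpos_of_nonpos_of_nonneg (by linarith) (by positivity)
    linarith
  have hdf : ∀ t : ℝ, 0 < t → HasDerivAt f (1/(2*τmin t)) t := by
    intro t ht
    have hτt := hπ t ht
    rw [hasDerivAt_iff_tendsto_slope, Metric.tendsto_nhdsWithin_nhds]
    intro ε hε
    obtain ⟨ε1, hε1def⟩ : ∃ e : ℝ, e = min (τmin t/2) (ε*τmin t^2/2) := ⟨_, rfl⟩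
    have hε1pos : 0 < ε1 := by
      rw [hε1def]
      exact lt_min (by positivity) (by positivity)
    have hε1a : ε1 ≤ τmin t/2 := by rw [hε1def]; exact min_le_left _ _
    have hε1b : ε1 ≤ ε*τmin t^2/2 := by rw [hε1def]; exact min_le_right _ _
    obtain ⟨sp, hsp1, hsp2⟩ := hrcont t ht ε1 hε1pos
    obtain ⟨sm, hsm0, hsm1, hsm2⟩ := hlcont t ht ε1 hε1pos
    refine ⟨min (sp - t) (t - sm), lt_min (by linarith) (by linarith), ?_⟩
    intro x hx hdist
    have hxne : x ≠ t := Set.mem_compl_singleton_iff.mp hx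
    rw [Real.dist_eq] at hdist
    rw [Real.dist_eq, slope_def_field]
    have hd1 : |x - t| < sp - t := lt_of_lt_of_le hdist (min_le_left _ _)
    have hd2 : |x - t| < t - sm := lt_of_lt_of_le hdist (min_le_right _ _)
    rcases lt_or_gt_of_ne hxne with hlt | hgt
    · have hxgt : sm < x := by
        have h := abs_lt.mp hd2
        linarith [h.1]
      have hx0 : 0 < x := lt_trans hsm0 hxgt
      have hτx := hπ x hx0
      have hmono1 : τmin x ≤ τmin t := hτmono x t hx0 hlt.le
      have hmono2 : τmin sm ≤ τmin x := hτmono sm x hsm0 hxgt.le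
      have hτxlow : τmin t - ε1 < τmin x := lt_of_lt_of_le hsm2 hmono2
      have he1 := henv x t hx0 ht
      have he2 := henv t x ht hx0
      have hxt : x - t < 0 := by linarith
      have hs_lb : 1/(2*τmin t) ≤ (f x - f t)/(x - t) := by
        rw [le_div_iff_of_neg hxt]
        have e : (x - t)/(2*τmin t) = 1/(2*τmin t) * (x - t) := by ring
        linarith
      have hs_ub : (f x - f t)/(x - t) ≤ 1/(2*τmin x) := by
        rw [div_le_iff_of_neg hxt]
        have e : (t - x)/(2*τmin x) = -(1/(2*τmin x) * (x - t)) := by ring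
        linarith
      have hτxpos2 : 0 < τmin t - ε1 := by linarith
      have hub2 : 1/(2*τmin x) ≤ 1/(2*(τmin t - ε1)) := by
        rw [div_le_div_iff₀ (by positivity) (by positivity)]
        nlinarith
      have hub3 : 1/(2*(τmin t - ε1)) - 1/(2*τmin t) ≤ ε/2 := by
        have e : 1/(2*(τmin t - ε1)) - 1/(2*τmin t) = ε1/(2*(τmin t - ε1)*τmin t) := by
          field_simp
          ring
        rw [e, div_le_iff₀ (by positivity)]
        nlinarith
      rw [abs_of_nonneg (by linarith)]
      linarith
    · have hxlt : x < sp := by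
        have h := abs_lt.mp hd1
        linarith [h.2]
      have hx0 : 0 < x := lt_trans ht hgt
      have hτx := hπ x hx0
      have hmono1 : τmin t ≤ τmin x := hτmono t x ht hgt.le
      have hmono2 : τmin x ≤ τmin sp := hτmono x sp hx0 hxlt.le
      have hτxup : τmin x < τmin t + ε1 := lt_of_le_of_lt hmono2 hsp2
      have he1 := henv x t hx0 ht
      have he2 := henv t x ht hx0
      have hxt : 0 < x - t := by linarith
      have hs_ub : (f x - f t)/(x - t) ≤ 1/(2*τmin t) := by
        rw [div_le_iff₀ hxt]
        have e : (x - t)/(2*τmin t) = 1/(2*τmin t) * (x - t) := by ring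
        linarith
      have hs_lb : 1/(2*τmin x) ≤ (f x - f t)/(x - t) := by
        rw [le_div_iff₀ hxt]
        have e : (t - x)/(2*τmin x) = -(1/(2*τmin x) * (x - t)) := by ring
        linarith
      have hlb2 : 1/(2*(τmin t + ε1)) ≤ 1/(2*τmin x) := by
        rw [div_le_div_iff₀ (by positivity) (by positivity)]
        nlinarith
      have hlb3 : 1/(2*τmin t) - 1/(2*(τmin t + ε1)) ≤ ε/2 := by
        have e : 1/(2*τmin t) - 1/(2*(τmin t + ε1)) = ε1/(2*(τmin t + ε1)*τmin t) := by
          field_simp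
          ring
        rw [e, div_le_iff₀ (by positivity)]
        nlinarith
      rw [abs_of_nonpos (by linarith)]
      linarith
  have hdR : ∀ t : ℝ, 0 < t → HasDerivAt R (f t/(2*τmin t)) t := by
    intro t ht
    have h1 := hdf t ht
    have hRe : R = fun u => f u ^ 2 / 2 := funext hR
    rw [hRe]
    have h2 := (h1.pow 2).div_const 2
    refine h2.congr_deriv ?_
    have hτt := hπ t ht
    field_simp
    ring
  have hrmono : ∀ s t : ℝ, 0 < s → s ≤ t → f s/(2*τmin s) ≤ f t/(2*τmin t) := by
    intro s t hs hst
    rcases eq_or_lt_of_le hst with rfl | hlt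
    · exact le_rfl
    have ht := lt_trans hs hlt
    have hτs := hπ s hs
    have hτt := hπ t ht
    have hmono := hτmono s t hs hst
    have hkey : s * τmin t^2 ≤ t * τmin s^2 := by
      rcases eq_or_lt_of_le hmono with heq | hτlt
      · rw [← heq]
        nlinarith
      · have step : ∀ ε : ℝ, 0 < ε → ε < (τmin t - τmin s)/2 →
            s*(τmin t - ε)*τmin t ≤ t*τmin s*(τmin s + ε) := by
          intro ε hε hεlt
          have hσpos : 0 < τmin s + ε := by linarith
          have hσ'pos : 0 < τmin t - ε := by linarith
          have h1 := hmin s hs (τmin s + ε) hσpos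
          rw [hFeq s _ hτs, hFeq s _ hσpos] at h1
          have h2 := hmin t ht (τmin t - ε) hσ'pos
          rw [hFeq t _ hτt, hFeq t _ hσ'pos] at h2
          have hsl1 := Hfun_convexOn.slope_mono_adjacent (mem_Ioi.2 hτs)
            (mem_Ioi.2 hσ'pos) (show τmin s < τmin s + ε by linarith)
            (show τmin s + ε < τmin t - ε by linarith)
          have hsl2 := Hfun_convexOn.slope_mono_adjacent (mem_Ioi.2 hσpos)
            (mem_Ioi.2 hτt) (show τmin s + ε < τmin t - ε by linarith)
            (show τmin t - ε < τmin t by linarith)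
          have hsl := hsl1.trans hsl2
          rw [show τmin s + ε - τmin s = ε by ring,
            show τmin t - (τmin t - ε) = ε by ring,
            div_le_div_iff₀ hε hε] at hsl
          have hHH : Hfun (τmin s + ε) - Hfun (τmin s)
              ≤ Hfun (τmin t) - Hfun (τmin t - ε) := by
            nlinarith
          have e1 : s/(2*τmin s) - s/(2*(τmin s+ε)) = s*ε/(2*τmin s*(τmin s+ε)) := by
            field_simp
            ring
          have e2 : t/(2*(τmin t-ε)) - t/(2*τmin t) = t*ε/(2*(τmin t-ε)*τmin t) := by
            field_simp
            ring
          have elin1 : (τmin s+ε)/2*(δ-1/2) - τmin s/2*(δ-1/2) = ε*(δ-1/2)/2 := by ring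
          have elin2 : τmin t/2*(δ-1/2) - (τmin t-ε)/2*(δ-1/2) = ε*(δ-1/2)/2 := by ring
          have i1 : s*ε/(2*τmin s*(τmin s+ε))
              ≤ ε*(δ-1/2)/2 + (Hfun (τmin s+ε) - Hfun (τmin s)) := by linarith
          have i2 : ε*(δ-1/2)/2 + (Hfun (τmin t) - Hfun (τmin t - ε))
              ≤ t*ε/(2*(τmin t-ε)*τmin t) := by linarith
          have ifin : s*ε/(2*τmin s*(τmin s+ε)) ≤ t*ε/(2*(τmin t-ε)*τmin t) := by
            linarith
          rw [div_le_div_iff₀ (by positivity) (by positivity)] at ifin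
          nlinarith
        by_contra hcon2
        push_neg at hcon2
        have hgap2 : 0 < s*τmin t^2 - t*τmin s^2 := by linarith
        have hden : 0 < s*τmin t + t*τmin s + 1 := by positivity
        obtain ⟨ε, hεdef⟩ : ∃ e : ℝ, e = min ((τmin t - τmin s)/4)
            ((s*τmin t^2 - t*τmin s^2)/(2*(s*τmin t + t*τmin s + 1))) := ⟨_, rfl⟩
        have hεpos : 0 < ε := by
          rw [hεdef]
          exact lt_min (by linarith) (div_pos hgap2 (by positivity))
        have hεlt : ε < (τmin t - τmin s)/2 := by
          have hq : ε ≤ (τmin t - τmin s)/4 := by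
            rw [hεdef]
            exact min_le_left _ _
          linarith
        have hstep := step ε hεpos hεlt
        have hεle : ε ≤ (s*τmin t^2 - t*τmin s^2)/(2*(s*τmin t + t*τmin s + 1)) := by
          rw [hεdef]
          exact min_le_right _ _
        rw [le_div_iff₀ (by positivity)] at hεle
        nlinarith
    rw [hfval s hs, hfval t ht]
    have hg : gmom (2/τmin s) ≤ gmom (2/τmin t) := by
      apply gmom_anti (by positivity)
      rw [div_le_div_iff₀ hτt hτs]
      linarith
    have hsdiv : s/(4*τmin s^2) ≤ t/(4*τmin t^2) := by
      rw [div_le_div_iff₀ (by positivity) (by positivity)]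
      nlinarith
    have eS : (τmin s/2*(δ-1/2) + s/(2*τmin s) + Hfun (τmin s))/(2*τmin s)
        = (δ-1/2)/4 + s/(4*τmin s^2) + gmom (2/τmin s)/4 := by
      unfold Hfun
      field_simp
      ring
    have eT : (τmin t/2*(δ-1/2) + t/(2*τmin t) + Hfun (τmin t))/(2*τmin t)
        = (δ-1/2)/4 + t/(4*τmin t^2) + gmom (2/τmin t)/4 := by
      unfold Hfun
      field_simp
      ring
    rw [eS, eT]
    linarith
  refine ⟨?_, ?_, fun t ht => ⟨?_, ?_⟩⟩
  · intro s hs t ht hst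
    rw [hR s, hR t]
    have h1 := hfpos s (mem_Ioi.mp hs)
    have h2 := hfmono s t (mem_Ioi.mp hs) hst
    nlinarith
  · apply MonotoneOn.convexOn_of_deriv (convex_Ioi 0)
    · intro u hu
      exact ((hdR u (mem_Ioi.mp hu)).continuousAt).continuousWithinAt
    · intro u hu
      rw [interior_Ioi] at hu
      exact ((hdR u (mem_Ioi.mp hu)).differentiableAt).differentiableWithinAt
    · intro s hs u hu hsu
      rw [interior_Ioi] at hs hu
      rw [(hdR s (mem_Ioi.mp hs)).deriv, (hdR u (mem_Ioi.mp hu)).deriv]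
      exact hrmono s u (mem_Ioi.mp hs) hsu
  · exact hdR t ht
  · have h := hfle t ht
    have hτt := hπ t ht
    rw [div_le_div_iff₀ (by positivity) (by norm_num)]
    nlinarith
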